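/- The function f: [0,1] → [0,1], defined on s-adic expansions by f(Σ αₙ s^{-n}) = Σ βₙ 2^{-n} with β₁ determined by whether α₁ ∈ A₀ or A₁, and β_{n+1} = βₙ iff α_{n+1} = αₙ, is continuous on [0,1]. -/

import Mathlib

open Set Filter

/-- Value of an `s`-adic code `α`: `∑ αₙ / sⁿ⁺¹`. -/
noncomputable def sval (s : ℕ) (α : ℕ → ℕ) : ℝ := ∑' n, (α n : ℝ) / (s : ℝ) ^ (n + 1)

/-- `α` is a sequence of digits in `{0, …, s−1}`. -/
def isDigits (s : ℕ) (α : ℕ → ℕ) : Prop := ∀ n, α n < s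

/-- The `s`-adic cylinder of rank `m` with base `c₀ … c_{m−1}`. -/
def cylinder (s m : ℕ) (c : ℕ → ℕ) : Set ℝ :=
  {x | ∃ α : ℕ → ℕ, isDigits s α ∧ (∀ i < m, α i = c i) ∧ x = sval s α}

/-- The sequence of output binary digits `βₙ`. -/
def betaSeq (A1 : Finset ℕ) (α : ℕ → ℕ) : ℕ → ℕ
  | 0 => if α 0 ∈ A1 then 1 else 0
  | n + 1 => if α (n + 1) = α n then betaSeq A1 α n else 1 - betaSeq A1 α n

lemma my_tsum_geo {b : ℝ} (hb : 1 < b) : ∑' n : ℕ, (1 / b) ^ (n + 1) = 1 / (b - 1) := by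
  have hb0 : (0:ℝ) < b := lt_trans one_pos hb
  have hr : |1 / b| < 1 := by
    rw [abs_of_pos (by positivity)]
    rw [div_lt_one hb0]; exact hb
  have : ∑' n : ℕ, (1 / b) ^ (n + 1) = (1/b) * ∑' n : ℕ, (1 / b) ^ n := by
    rw [← tsum_mul_left]; exact tsum_congr fun n => by ring
  rw [this, tsum_geometric_of_abs_lt_one hr]
  field_simp

lemma my_summable {b : ℕ} (hb : 1 < b) {α : ℕ → ℕ} (hd : isDigits b α) :
    Summable (fun n => (α n : ℝ) / (b : ℝ) ^ (n + 1)) := by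
  have hb0 : (0:ℝ) < b := by exact_mod_cast Nat.lt_of_lt_of_le Nat.zero_lt_one hb.le
  have hb1 : (1:ℝ) < b := by exact_mod_cast hb
  apply Summable.of_nonneg_of_le (fun n => by positivity)
    (f := fun n : ℕ => (1 / (b:ℝ)) ^ n)
  · intro n
    have h1 : (α n : ℝ) ≤ b := by exact_mod_cast (hd n).le
    rw [div_pow, one_pow]
    rw [div_le_div_iff₀ (by positivity) (by positivity)]
    calc (α n : ℝ) * (b:ℝ)^n ≤ (b:ℝ) * (b:ℝ)^n := by
          exact mul_le_mul_of_nonneg_right h1 (by positivity)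
      _ = 1 * (b:ℝ)^(n+1) := by ring
  · exact summable_geometric_of_lt_one (by positivity) (by rw [div_lt_one hb0]; exact hb1)

lemma my_sval_nonneg {b : ℕ} {α : ℕ → ℕ} : 0 ≤ sval b α :=
  tsum_nonneg fun n => by positivity

lemma my_sval_le_one {b : ℕ} (hb : 1 < b) {α : ℕ → ℕ} (hd : isDigits b α) :
    sval b α ≤ 1 := by
  have hb1 : (1:ℝ) < b := by exact_mod_cast hb
  have hb0 : (0:ℝ) < b := lt_trans one_pos hb1
  have key : ∀ n : ℕ, (α n : ℝ) / (b:ℝ)^(n+1) ≤ ((b:ℝ) - 1) * (1/(b:ℝ))^(n+1) := by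
    intro n
    have h1 : (α n : ℝ) ≤ (b:ℝ) - 1 := by
      have := Nat.lt_iff_add_one_le.mp (hd n)
      have : ((α n : ℕ) : ℝ) + 1 ≤ b := by exact_mod_cast this
      linarith
    rw [div_pow, one_pow]
    rw [div_le_iff₀ (by positivity)] at *
    calc (α n : ℝ) ≤ (b:ℝ) - 1 := h1
      _ = (((b:ℝ)-1) * 1 / (b:ℝ)^(n+1)) * (b:ℝ)^(n+1) := by field_simp
      _ = ((b:ℝ)-1) * (1 / (b:ℝ)^(n+1)) * (b:ℝ)^(n+1) := by ring
  have hg : Summable (fun n : ℕ => (1/(b:ℝ))^(n+1)) := by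
    simpa [pow_succ] using (summable_geometric_of_lt_one (r := 1/(b:ℝ)) (by positivity)
      (by rw [div_lt_one hb0]; exact hb1)).mul_right (1/(b:ℝ))
  have hsum2 : Summable (fun n : ℕ => ((b:ℝ) - 1) * (1/(b:ℝ))^(n+1)) := hg.mul_left _
  calc sval b α ≤ ∑' n, ((b:ℝ) - 1) * (1/(b:ℝ))^(n+1) :=
        Summable.tsum_le_tsum key (my_summable hb hd) hsum2
    _ = ((b:ℝ) - 1) * (1/((b:ℝ)-1)) := by rw [tsum_mul_left, my_tsum_geo hb1]
    _ = 1 := by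
        rw [mul_one_div, div_self (sub_ne_zero.mpr (ne_of_gt hb1))]

lemma my_sval_split {b : ℕ} (hb : 1 < b) {α : ℕ → ℕ} (hd : isDigits b α) (m : ℕ) :
    sval b α = (∑ i ∈ Finset.range m, (α i : ℝ) / (b:ℝ)^(i+1))
      + (1/(b:ℝ))^m * sval b (fun i => α (i + m)) := by
  have hb0 : (0:ℝ) < b := by positivity
  have h := (my_summable hb hd).sum_add_tsum_nat_add m
  rw [sval, ← h]
  congr 1
  rw [sval, ← tsum_mul_left]
  apply tsum_congr
  intro n
  rw [div_pow, one_pow]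
  rw [show n + m + 1 = m + (n+1) from by omega, pow_add]
  field_simp

lemma my_sval_const_eq_one {b : ℕ} (hb : 1 < b) : sval b (fun _ => b - 1) = 1 := by
  have hb1 : (1:ℝ) < b := by exact_mod_cast hb
  have hb0 : (0:ℝ) < b := lt_trans one_pos hb1
  have hcast : ((b - 1 : ℕ) : ℝ) = (b:ℝ) - 1 := by
    have : 1 ≤ b := hb.le
    push_cast [this]; ring
  have : sval b (fun _ => b - 1) = ∑' n : ℕ, ((b:ℝ) - 1) * (1/(b:ℝ))^(n+1) := by
    rw [sval]
    apply tsum_congr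
    intro n
    rw [hcast, div_pow, one_pow]
    field_simp
  rw [this, tsum_mul_left, my_tsum_geo hb1, mul_one_div,
    div_self (sub_ne_zero.mpr (ne_of_gt hb1))]

lemma my_exists_expansion {b : ℕ} (hb : 1 < b) {y : ℝ} (hy : y ∈ Set.Icc (0:ℝ) 1) :
    ∃ α, isDigits b α ∧ sval b α = y := by
  obtain ⟨hy0, hy1⟩ := hy
  have hb1 : (1:ℝ) < b := by exact_mod_cast hb
  have hb0 : (0:ℝ) < b := lt_trans one_pos hb1
  rcases eq_or_lt_of_le hy1 with h1 | h1
  · exact ⟨fun _ => b - 1, fun n => by show b - 1 < b; omega, by rw [my_sval_const_eq_one hb, h1]⟩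
  -- y < 1
  set α : ℕ → ℕ := fun n => ⌊y * (b:ℝ)^(n+1)⌋₊ - b * ⌊y * (b:ℝ)^n⌋₊ with hα
  have key : ∀ n, b * ⌊y * (b:ℝ)^n⌋₊ ≤ ⌊y * (b:ℝ)^(n+1)⌋₊ ∧
      ⌊y * (b:ℝ)^(n+1)⌋₊ < b * ⌊y * (b:ℝ)^n⌋₊ + b := by
    intro n
    have hfl : (⌊y * (b:ℝ)^n⌋₊ : ℝ) ≤ y * (b:ℝ)^n := Nat.floor_le (by positivity)
    have hfl2 : y * (b:ℝ)^n < ⌊y * (b:ℝ)^n⌋₊ + 1 := Nat.lt_floor_add_one _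
    constructor
    · apply Nat.le_floor
      push_cast
      calc ((b:ℝ)) * ⌊y * (b:ℝ)^n⌋₊ ≤ (b:ℝ) * (y * (b:ℝ)^n) :=
            mul_le_mul_of_nonneg_left hfl (le_of_lt hb0)
        _ = y * (b:ℝ)^(n+1) := by ring
    · rw [Nat.floor_lt (by positivity)]
      push_cast
      calc y * (b:ℝ)^(n+1) = (b:ℝ) * (y * (b:ℝ)^n) := by ring
        _ < (b:ℝ) * (⌊y * (b:ℝ)^n⌋₊ + 1) := by
            exact mul_lt_mul_of_pos_left hfl2 hb0
        _ = (b:ℝ) * ⌊y * (b:ℝ)^n⌋₊ + b := by ring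
  have hdig : isDigits b α := fun n => by
    have := key n; simp only [hα]; omega
  have hcast : ∀ n, (α n : ℝ) = (⌊y * (b:ℝ)^(n+1)⌋₊ : ℝ) - b * ⌊y * (b:ℝ)^n⌋₊ := by
    intro n
    have := (key n).1
    simp only [hα]
    push_cast [Nat.cast_sub this]
    ring
  have hpartial : ∀ n, ∑ i ∈ Finset.range n, (α i : ℝ) / (b:ℝ)^(i+1)
      = (⌊y * (b:ℝ)^n⌋₊ : ℝ) / (b:ℝ)^n := by
    intro n
    induction n with
    | zero => simp [Nat.floor_eq_zero.mpr h1]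
    | succ n ih =>
      rw [Finset.sum_range_succ, ih, hcast n]
      field_simp
      ring
  have htend : Tendsto (fun n => ∑ i ∈ Finset.range n, (α i : ℝ) / (b:ℝ)^(i+1)) atTop (nhds y) := by
    have hlow : ∀ n : ℕ, y - (1/(b:ℝ))^n ≤ ∑ i ∈ Finset.range n, (α i : ℝ) / (b:ℝ)^(i+1) := by
      intro n
      rw [hpartial n]
      have h2 : y * (b:ℝ)^n - 1 < ⌊y * (b:ℝ)^n⌋₊ := by
        have := Nat.lt_floor_add_one (y * (b:ℝ)^n); linarith
      have hc : (1/(b:ℝ)^n) * (b:ℝ)^n = 1 := one_div_mul_cancel (by positivity)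
      rw [div_pow, one_pow, le_div_iff₀ (by positivity)]
      nlinarith [pow_pos hb0 n, hc]
    have hhigh : ∀ n : ℕ, ∑ i ∈ Finset.range n, (α i : ℝ) / (b:ℝ)^(i+1) ≤ y := by
      intro n
      rw [hpartial n, div_le_iff₀ (by positivity)]
      exact Nat.floor_le (by positivity)
    have hgeo : Tendsto (fun n : ℕ => y - (1/(b:ℝ))^n) atTop (nhds y) := by
      have : Tendsto (fun n : ℕ => (1/(b:ℝ))^n) atTop (nhds 0) :=
        tendsto_pow_atTop_nhds_zero_of_lt_one (by positivity) (by rw [div_lt_one hb0]; exact hb1)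
      simpa using tendsto_const_nhds.sub this
    exact tendsto_of_tendsto_of_tendsto_of_le_of_le hgeo tendsto_const_nhds hlow hhigh
  refine ⟨α, hdig, ?_⟩
  rw [sval]
  exact ((my_summable hb hdig).hasSum_iff_tendsto_nat.mpr htend).tsum_eq

lemma my_digitsum {b : ℕ} (hb : 1 < b) :
    ∀ (m k : ℕ), k < b ^ m →
      ∑ i ∈ Finset.range m, ((k / b ^ (m - 1 - i) % b : ℕ) : ℝ) / (b:ℝ)^(i+1)
        = (k:ℝ) / (b:ℝ)^m := by
  intro m
  induction m with
  | zero =>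
    intro k hk
    have : k = 0 := by simpa using hk
    subst this; simp
  | succ m ih =>
    intro k hk
    have hb0 : (0:ℝ) < b := by positivity
    have hbne : (b:ℝ) ≠ 0 := ne_of_gt hb0
    rw [Finset.sum_range_succ]
    have hlast : m + 1 - 1 - m = 0 := by omega
    have hstep : ∀ i ∈ Finset.range m,
        ((k / b ^ (m + 1 - 1 - i) % b : ℕ) : ℝ) / (b:ℝ)^(i+1)
          = (((k / b) / b ^ (m - 1 - i) % b : ℕ) : ℝ) / (b:ℝ)^(i+1) := by
      intro i hi
      have him : i < m := Finset.mem_range.mp hi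
      congr 2
      rw [Nat.div_div_eq_div_mul, ← pow_succ']
      have : m + 1 - 1 - i = m - 1 - i + 1 := by omega
      rw [this]
    have hklt : k / b < b ^ m := Nat.div_lt_of_lt_mul (by rw [← pow_succ']; exact hk)
    rw [Finset.sum_congr rfl hstep, ih (k / b) hklt]
    rw [hlast]
    simp only [pow_zero, Nat.div_one]
    have hmod := Nat.div_add_mod k b
    have : (k:ℝ) = (b:ℝ) * ((k / b : ℕ):ℝ) + ((k % b : ℕ):ℝ) := by exact_mod_cast hmod.symm
    rw [this]
    field_simp
    ring

lemma my_cell_expansion {b : ℕ} (hb : 1 < b) (m k : ℕ) (hk : k < b ^ m) {x : ℝ}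
    (hx : (k:ℝ) / (b:ℝ)^m ≤ x) (hx' : x ≤ ((k:ℝ) + 1) / (b:ℝ)^m) :
    ∃ α, isDigits b α ∧ sval b α = x ∧ ∀ i < m, α i = k / b ^ (m - 1 - i) % b := by
  have hb0 : (0:ℝ) < b := by positivity
  have hp : (0:ℝ) < (b:ℝ)^m := by positivity
  set t : ℝ := x * (b:ℝ)^m - k with ht
  have ht0 : 0 ≤ t := by
    have := (div_le_iff₀ hp).mp hx
    linarith
  have ht1 : t ≤ 1 := by
    have := (le_div_iff₀ hp).mp hx'
    linarith
  obtain ⟨γ, hγd, hγv⟩ := my_exists_expansion hb ⟨ht0, ht1⟩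
  set α : ℕ → ℕ := fun i => if i < m then k / b ^ (m - 1 - i) % b else γ (i - m) with hα
  have hαd : isDigits b α := by
    intro n
    simp only [hα]
    split
    · exact Nat.mod_lt _ (by omega)
    · exact hγd _
  refine ⟨α, hαd, ?_, fun i hi => by simp [hα, hi]⟩
  rw [my_sval_split hb hαd m]
  have h1 : ∑ i ∈ Finset.range m, (α i : ℝ) / (b:ℝ)^(i+1) = (k:ℝ) / (b:ℝ)^m := by
    rw [← my_digitsum hb m k hk]
    apply Finset.sum_congr rfl
    intro i hi
    simp [hα, Finset.mem_range.mp hi]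
  have h2 : (fun i => α (i + m)) = γ := by
    funext i
    simp [hα]
  rw [h1, h2, hγv, div_pow, one_pow, ht]
  field_simp
  ring

lemma my_beta_digits (A1 : Finset ℕ) (α : ℕ → ℕ) : isDigits 2 (betaSeq A1 α) := by
  intro n
  induction n with
  | zero => rw [betaSeq]; split <;> omega
  | succ n ih => rw [betaSeq]; split <;> omega

lemma my_beta_agree (A1 : Finset ℕ) {α γ : ℕ → ℕ} :
    ∀ n, (∀ i ≤ n, α i = γ i) → betaSeq A1 α n = betaSeq A1 γ n := by
  intro n
  induction n with
  | zero => intro h; rw [betaSeq, betaSeq, h 0 le_rfl]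
  | succ n ih =>
    intro h
    rw [betaSeq, betaSeq, h (n+1) le_rfl, h n (Nat.le_succ n),
      ih (fun i hi => h i (hi.trans (Nat.le_succ n)))]

lemma my_sval2_diff {β γ : ℕ → ℕ} (hβ : isDigits 2 β) (hγ : isDigits 2 γ) (m : ℕ)
    (h : ∀ i < m, β i = γ i) : |sval 2 β - sval 2 γ| ≤ (1/2:ℝ)^m := by
  have h2 : (1:ℕ) < 2 := one_lt_two
  rw [my_sval_split h2 hβ m, my_sval_split h2 hγ m]
  push_cast
  have hpre : ∑ i ∈ Finset.range m, (β i : ℝ) / (2:ℝ)^(i+1)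
      = ∑ i ∈ Finset.range m, (γ i : ℝ) / (2:ℝ)^(i+1) := by
    apply Finset.sum_congr rfl
    intro i hi
    rw [h i (Finset.mem_range.mp hi)]
  rw [hpre]
  rw [add_sub_add_left_eq_sub]
  have hT0 : (0:ℝ) ≤ sval 2 (fun i => β (i + m)) := my_sval_nonneg
  have hT1 : sval 2 (fun i => β (i + m)) ≤ 1 := my_sval_le_one h2 (fun n => hβ _)
  have hU0 : (0:ℝ) ≤ sval 2 (fun i => γ (i + m)) := my_sval_nonneg
  have hU1 : sval 2 (fun i => γ (i + m)) ≤ 1 := my_sval_le_one h2 (fun n => hγ _)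
  rw [← mul_sub, abs_mul, abs_of_nonneg (by positivity : (0:ℝ) ≤ ((1:ℝ)/2)^m)]
  have : |sval 2 (fun i => β (i + m)) - sval 2 (fun i => γ (i + m))| ≤ 1 := by
    rw [abs_le]; constructor <;> linarith
  calc ((1:ℝ)/2)^m * |sval 2 (fun i => β (i + m)) - sval 2 (fun i => γ (i + m))|
      ≤ ((1:ℝ)/2)^m * 1 := mul_le_mul_of_nonneg_left this (by positivity)
    _ = (1/2:ℝ)^m := by norm_num

lemma my_cell_fbound {s : ℕ} (hs1 : 1 < s) (A1 : Finset ℕ) (f : ℝ → ℝ)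
    (hf : ∀ α : ℕ → ℕ, isDigits s α → f (sval s α) = sval 2 (betaSeq A1 α))
    (m k : ℕ) (hk : k < s ^ m) {x y : ℝ}
    (hx : (k:ℝ)/(s:ℝ)^m ≤ x) (hx' : x ≤ ((k:ℝ)+1)/(s:ℝ)^m)
    (hy : (k:ℝ)/(s:ℝ)^m ≤ y) (hy' : y ≤ ((k:ℝ)+1)/(s:ℝ)^m) :
    |f x - f y| ≤ (1/2:ℝ)^m := by
  obtain ⟨α, hαd, hαv, hαp⟩ := my_cell_expansion hs1 m k hk hx hx'
  obtain ⟨γ, hγd, hγv, hγp⟩ := my_cell_expansion hs1 m k hk hy hy'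
  rw [← hαv, ← hγv, hf α hαd, hf γ hγd]
  apply my_sval2_diff (my_beta_digits A1 α) (my_beta_digits A1 γ) m
  intro i hi
  apply my_beta_agree A1 i
  intro j hj
  rw [hαp j (lt_of_le_of_lt hj hi), hγp j (lt_of_le_of_lt hj hi)]

lemma my_cell_mem {s : ℕ} (hs1 : 1 < s) (m : ℕ) {u : ℝ} (hu0 : 0 ≤ u) (hu1 : u ≤ 1) :
    min ⌊u * (s:ℝ)^m⌋₊ (s^m - 1) < s ^ m ∧
    ((min ⌊u * (s:ℝ)^m⌋₊ (s^m - 1) : ℕ) : ℝ)/(s:ℝ)^m ≤ u ∧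
    u ≤ ((min ⌊u * (s:ℝ)^m⌋₊ (s^m - 1) : ℕ) + 1)/(s:ℝ)^m := by
  have hsm : 0 < s ^ m := Nat.pow_pos (by omega)
  have hp : (0:ℝ) < (s:ℝ)^m := by positivity
  set k := min ⌊u * (s:ℝ)^m⌋₊ (s^m - 1) with hkdef
  refine ⟨by omega, ?_, ?_⟩
  · rw [div_le_iff₀ hp]
    calc ((k:ℕ):ℝ) ≤ (⌊u * (s:ℝ)^m⌋₊ : ℝ) := Nat.cast_le.mpr (min_le_left _ _)
      _ ≤ u * (s:ℝ)^m := Nat.floor_le (by positivity)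
  · rw [le_div_iff₀ hp]
    rcases le_or_gt (⌊u * (s:ℝ)^m⌋₊) (s^m - 1) with hc | hc
    · have hk' : k = ⌊u * (s:ℝ)^m⌋₊ := min_eq_left hc
      have := Nat.lt_floor_add_one (u * (s:ℝ)^m)
      rw [hk']
      push_cast
      linarith
    · have hk' : k = s^m - 1 := min_eq_right (le_of_lt hc)
      have : ((k:ℕ):ℝ) + 1 = ((s:ℝ))^m := by
        rw [hk']
        have : ((s^m - 1 : ℕ):ℝ) = ((s^m : ℕ):ℝ) - 1 := by
          push_cast [Nat.one_le_iff_ne_zero.mpr (Nat.pos_iff_ne_zero.mp hsm)]; ring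
        rw [this]
        push_cast
        ring
      rw [this]
      nlinarith

/-- the function `f` is continuous on `[0,1]`. -/
theorem f_continuous (s : ℕ) (hs : 2 < s) (A0 A1 : Finset ℕ)
    (hA : A0 ∪ A1 = Finset.range s) (hdisj : Disjoint A0 A1)
    (h0 : A0.Nonempty) (h1 : A1.Nonempty) (f : ℝ → ℝ)
    (hf : ∀ α : ℕ → ℕ, isDigits s α → f (sval s α) = sval 2 (betaSeq A1 α)) :
    ContinuousOn f (Set.Icc (0 : ℝ) 1) := by
  have hs1 : 1 < s := by omega
  have hsr : (1:ℝ) < s := by exact_mod_cast hs1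
  have hsr0 : (0:ℝ) < s := lt_trans one_pos hsr
  rw [Metric.continuousOn_iff]
  intro x hx ε hε
  obtain ⟨m, hm⟩ : ∃ m : ℕ, (1/2:ℝ)^m < ε/2 := by
    exact exists_pow_lt_of_lt_one (by positivity) (by norm_num)
  have hp : (0:ℝ) < (s:ℝ)^m := by positivity
  refine ⟨(1/(s:ℝ))^m, by positivity, ?_⟩
  intro y hy hxy
  obtain ⟨hx0, hx1⟩ := hx
  obtain ⟨hy0, hy1⟩ := hy
  obtain ⟨hkx, hkxl, hkxu⟩ := my_cell_mem hs1 m hx0 hx1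
  obtain ⟨hky, hkyl, hkyu⟩ := my_cell_mem hs1 m hy0 hy1
  set kx := min ⌊x * (s:ℝ)^m⌋₊ (s^m - 1) with hkxdef
  set ky := min ⌊y * (s:ℝ)^m⌋₊ (s^m - 1) with hkydef
  -- adjacency
  have hdist : |y - x| ≤ (1/(s:ℝ))^m := by
    rw [Real.dist_eq] at hxy; exact le_of_lt hxy
  have hadj : kx ≤ ky + 1 ∧ ky ≤ kx + 1 := by
    have hc : (1/(s:ℝ))^m * (s:ℝ)^m = 1 := by
      rw [div_pow, one_pow]; field_simp
    have key : ∀ u v : ℝ, 0 ≤ u → 0 ≤ v → u - v ≤ (1/(s:ℝ))^m →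
        ⌊u * (s:ℝ)^m⌋₊ ≤ ⌊v * (s:ℝ)^m⌋₊ + 1 := by
      intro u v hu hv huv
      have h1 : u * (s:ℝ)^m ≤ v * (s:ℝ)^m + 1 := by nlinarith
      calc ⌊u * (s:ℝ)^m⌋₊ ≤ ⌊v * (s:ℝ)^m + 1⌋₊ := Nat.floor_le_floor h1
        _ = ⌊v * (s:ℝ)^m⌋₊ + 1 := by
            rw [Nat.floor_add_one (by positivity)]
    have h1 := key x y hx0 hy0 (by cases abs_le.mp hdist; linarith)
    have h2 := key y x hy0 hx0 (by cases abs_le.mp hdist; linarith)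
    omega
  have hbound : ∀ (a b : ℕ), a < s^m → b < s^m → a = b ∨ a + 1 = b →
      ∀ u v : ℝ, (a:ℝ)/(s:ℝ)^m ≤ u → u ≤ ((a:ℝ)+1)/(s:ℝ)^m →
        (b:ℝ)/(s:ℝ)^m ≤ v → v ≤ ((b:ℝ)+1)/(s:ℝ)^m →
        |f u - f v| ≤ 2 * (1/2:ℝ)^m := by
    intro a b ha hb hab u v hu hu' hv hv'
    rcases hab with rfl | hab
    · have := my_cell_fbound hs1 A1 f hf m a ha hu hu' hv hv'
      have hpos : (0:ℝ) ≤ (1/2:ℝ)^m := by positivity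
      linarith
    · -- b = a + 1, z = b/s^m is in both cells
      set z : ℝ := (b:ℝ)/(s:ℝ)^m with hz
      have hzb : (b:ℝ) = (a:ℝ) + 1 := by exact_mod_cast hab.symm
      have h1 : |f u - f z| ≤ (1/2:ℝ)^m := by
        apply my_cell_fbound hs1 A1 f hf m a ha hu hu'
        · rw [hz, hzb, div_le_div_iff₀ hp hp]; nlinarith
        · rw [hz, hzb]
      have h2 : |f z - f v| ≤ (1/2:ℝ)^m := by
        apply my_cell_fbound hs1 A1 f hf m b hb le_rfl _ hv hv'
        rw [div_le_div_iff₀ hp hp]; nlinarith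
      calc |f u - f v| ≤ |f u - f z| + |f z - f v| := abs_sub_le _ _ _
        _ ≤ 2 * (1/2:ℝ)^m := by linarith
  have hfin : |f y - f x| ≤ 2 * (1/2:ℝ)^m := by
    rcases hadj with ⟨hd1, hd2⟩
    rcases Nat.lt_trichotomy kx ky with hlt | heq | hgt
    · have : kx + 1 = ky := by omega
      have := hbound kx ky hkx hky (Or.inr this) x y hkxl hkxu hkyl hkyu
      rw [abs_sub_comm] at this
      exact this
    · exact hbound ky kx hky hkx (Or.inl heq.symm) y x hkyl hkyu hkxl hkxu
    · have : ky + 1 = kx := by omega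
      exact hbound ky kx hky hkx (Or.inr this) y x hkyl hkyu hkxl hkxu
  rw [Real.dist_eq]
  calc |f y - f x| ≤ 2 * (1/2:ℝ)^m := hfin
    _ < ε := by linarith
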